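/- arXiv:1309.6389 — 4 statements merged into one kernel-verified Lean document; each statement's English description precedes it below -/
import Mathlib

section
/- Let a < b be real numbers and let f : [a,b] → ℂ have a continuous derivative on [a,b]. Then for every u ∈ [a,b], |f(u)| ≤ (1/(b−a)) ∫_a^b |f(x)| dx + ∫_a^b |f'(x)| dx. -/
/-- Sobolev–Gallagher inequality: if `f` is continuously differentiable on `[a,b]`
(with derivative `f'`), then for every `u ∈ [a,b]`,
`|f(u)| ≤ (b-a)⁻¹ ∫_a^b |f| + ∫_a^b |f'|`. -/
theorem statement_3 (a b : ℝ) (hab : a < b) (f f' : ℝ → ℂ)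
    (hderiv : ∀ x ∈ Set.Icc a b, HasDerivWithinAt f (f' x) (Set.Icc a b) x)
    (hcont : ContinuousOn f' (Set.Icc a b)) :
    ∀ u ∈ Set.Icc a b,
      ‖f u‖ ≤ (1 / (b - a)) * ∫ x in a..b, ‖f x‖
        + ∫ x in a..b, ‖f' x‖ := by
  intro u hu
  have hab' : a ≤ b := hab.le
  have fcont : ContinuousOn f (Set.Icc a b) := fun x hx => (hderiv x hx).continuousWithinAt
  have f'int : IntervalIntegrable f' MeasureTheory.volume a b := by
    apply ContinuousOn.intervalIntegrable
    rwa [Set.uIcc_of_le hab']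
  have nfint : IntervalIntegrable (fun t => ‖f t‖) MeasureTheory.volume a b := by
    apply ContinuousOn.intervalIntegrable
    rw [Set.uIcc_of_le hab']
    exact continuous_norm.comp_continuousOn fcont
  have nf'int : IntervalIntegrable (fun t => ‖f' t‖) MeasureTheory.volume a b := by
    apply ContinuousOn.intervalIntegrable
    rw [Set.uIcc_of_le hab']
    exact continuous_norm.comp_continuousOn hcont
  set C : ℝ := ∫ t in a..b, ‖f' t‖ with hC
  have key : ∀ x ∈ Set.Icc a b, ‖f u‖ ≤ ‖f x‖ + C := by
    intro x hx
    have hsub : Set.uIcc x u ⊆ Set.Icc a b := Set.uIcc_subset_Icc hx hu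
    have ftc : ∫ t in x..u, f' t = f u - f x := by
      apply intervalIntegral.integral_eq_sub_of_hasDeriv_right
        (fcont.mono hsub)
      · intro t ht
        have ht' : t ∈ Set.Ioo a b := by
          constructor
          · exact lt_of_le_of_lt (le_min hx.1 hu.1) ht.1
          · exact lt_of_lt_of_le ht.2 (max_le hx.2 hu.2)
        exact ((hderiv t (Set.Ioo_subset_Icc_self ht')).hasDerivAt
          (Icc_mem_nhds ht'.1 ht'.2)).hasDerivWithinAt
      · exact f'int.mono_set (by rwa [Set.uIcc_of_le hab'])
    have h1 : ‖f u‖ - ‖f x‖ ≤ ‖f u - f x‖ := by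
      simpa using norm_sub_norm_le (f u) (f x)
    have h2 : ‖f u - f x‖ ≤ C := by
      rw [← ftc]
      calc ‖∫ t in x..u, f' t‖
          ≤ |∫ t in x..u, ‖f' t‖| := by
            simpa using
              intervalIntegral.norm_integral_le_abs_integral_norm (f := f') (a := x) (b := u)
        _ ≤ ∫ t in a..b, ‖f' t‖ := by
            rw [← abs_of_nonneg (intervalIntegral.integral_nonneg hab'
              (fun t _ => norm_nonneg (f' t)))]
            apply intervalIntegral.abs_integral_mono_interval
            · rw [Set.uIoc_of_le hab']
              simp only [Set.uIoc]
              exact Set.Ioc_subset_Ioc (le_min hx.1 hu.1) (max_le hx.2 hu.2)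
            · filter_upwards with t using norm_nonneg _
            · exact nf'int
    linarith
  have hint : (b - a) * ‖f u‖ ≤ (∫ x in a..b, ‖f x‖) + (b - a) * C := by
    have := intervalIntegral.integral_mono_on hab'
      (intervalIntegrable_const (c := ‖f u‖))
      (nfint.add (intervalIntegrable_const (c := C))) key
    simpa [intervalIntegral.integral_add nfint (intervalIntegrable_const (c := C)),
      mul_comm] using this
  have hba : (0:ℝ) < b - a := by linarith
  have hsplit : (∫ x in a..b, (‖f x‖ + C)) =
      (∫ x in a..b, ‖f x‖) + (b - a) * C := by
    rw [intervalIntegral.integral_add nfint (intervalIntegrable_const (c := C))]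
    simp [mul_comm]
  rw [show ((1 : ℝ) / (b - a)) * ∫ x in a..b, ‖f x‖
        + ∫ x in a..b, ‖f' x‖
      = (1 / (b - a)) * ∫ x in a..b, (‖f x‖ + C) from rfl,
    hsplit, div_mul_eq_mul_div, one_mul, le_div_iff₀ hba]
  nlinarith [hint]
end

section
/- Let F(x) = L x² + M x + N be a real quadratic polynomial with L ≠ 0, and suppose F has two distinct (complex) roots α₁ ≠ α₂. Then for every ε > 0, the Lebesgue measure of the set { x ∈ ℝ : |F(x)| ≤ ε } is at most 8ε / (|L| · |α₁ − α₂|). -/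
/-- If `F(x) = Lx² + Mx + N` is a real quadratic with `L ≠ 0` and distinct complex
roots `α₁ ≠ α₂`, then `μ({x : |F(x)| ≤ ε}) ≤ 8ε / (|L| |α₁ - α₂|)`. -/
theorem statement_4 (L M N : ℝ) (hL : L ≠ 0) (α₁ α₂ : ℂ) (hα : α₁ ≠ α₂)
    (hroots : ∀ x : ℂ, (L : ℂ) * x ^ 2 + (M : ℂ) * x + (N : ℂ)
      = (L : ℂ) * (x - α₁) * (x - α₂)) (ε : ℝ) (hε : 0 < ε) :
    MeasureTheory.volume {x : ℝ | |L * x ^ 2 + M * x + N| ≤ ε}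
      ≤ ENNReal.ofReal (8 * ε / (|L| * ‖α₁ - α₂‖)) := by
  set δ := ‖α₁ - α₂‖ with hδdef
  have hδ : 0 < δ := by
    simpa [hδdef, sub_eq_zero] using hα
  have hLpos : (0:ℝ) < |L| := abs_pos.mpr hL
  set r := 2 * ε / (|L| * δ) with hrdef
  have hrpos : 0 < r := by positivity
  have hsub : {x : ℝ | |L * x ^ 2 + M * x + N| ≤ ε} ⊆
      Metric.closedBall α₁.re r ∪ Metric.closedBall α₂.re r := by
    intro x hx
    simp only [Set.mem_setOf_eq] at hx
    have hC : ‖(L:ℂ) * ((x:ℂ) - α₁) * ((x:ℂ) - α₂)‖ ≤ ε := by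
      rw [← hroots x]
      have he : ((L:ℂ) * (x:ℂ) ^ 2 + (M:ℂ) * (x:ℂ) + (N:ℂ))
          = ((L * x ^ 2 + M * x + N : ℝ) : ℂ) := by push_cast; ring
      rw [he, Complex.norm_real, Real.norm_eq_abs]
      exact hx
    rw [norm_mul, norm_mul, Complex.norm_real, Real.norm_eq_abs] at hC
    set a := ‖(x:ℂ) - α₁‖ with hadef
    set b := ‖(x:ℂ) - α₂‖ with hbdef
    have ha0 : 0 ≤ a := norm_nonneg _
    have hb0 : 0 ≤ b := norm_nonneg _
    have hδab : δ ≤ a + b := by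
      have := norm_sub_le_norm_sub_add_norm_sub α₁ (x:ℂ) α₂
      have h1 : ‖α₁ - (x:ℂ)‖ = a := by
        rw [hadef]; exact norm_sub_rev α₁ (x:ℂ)
      rw [h1] at this
      exact this
    have hre1 : |x - α₁.re| ≤ a := by
      have : |((x:ℂ) - α₁).re| ≤ a := Complex.abs_re_le_norm _
      simpa using this
    have hre2 : |x - α₂.re| ≤ b := by
      have : |((x:ℂ) - α₂).re| ≤ b := Complex.abs_re_le_norm _
      simpa using this
    rcases le_total a b with hab | hab
    · left
      rw [Metric.mem_closedBall, Real.dist_eq]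
      refine hre1.trans ?_
      rw [hrdef, le_div_iff₀ (by positivity)]
      nlinarith
    · right
      rw [Metric.mem_closedBall, Real.dist_eq]
      refine hre2.trans ?_
      rw [hrdef, le_div_iff₀ (by positivity)]
      nlinarith
  calc MeasureTheory.volume {x : ℝ | |L * x ^ 2 + M * x + N| ≤ ε}
      ≤ MeasureTheory.volume (Metric.closedBall α₁.re r ∪ Metric.closedBall α₂.re r) :=
        MeasureTheory.measure_mono hsub
    _ ≤ MeasureTheory.volume (Metric.closedBall α₁.re r)
        + MeasureTheory.volume (Metric.closedBall α₂.re r) :=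
        MeasureTheory.measure_union_le _ _
    _ = ENNReal.ofReal (2 * r) + ENNReal.ofReal (2 * r) := by
        rw [Real.volume_closedBall, Real.volume_closedBall]
    _ = ENNReal.ofReal (4 * r) := by
        rw [← ENNReal.ofReal_add (by positivity) (by positivity)]; ring_nf
    _ = ENNReal.ofReal (8 * ε / (|L| * δ)) := by
        congr 1
        rw [hrdef]; ring
end

section
/- For every K > 0 there is a constant C(K) > 0 with the following property. Let A, B, V, t be real numbers with 0 ≤ A < B, B ≤ K·V, V ≥ 1, t ≥ 1, and let v₁, v₂, v₃, v₄ be integers with V/2 < vᵢ ≤ V for each i, (v₁−v₃)(v₁−v₄)(v₂−v₃)(v₂−v₄) ≠ 0, and v₁ + v₂ = v₃ + v₄. Set F(x) = (x+v₁)(x+v₂) / ((x+v₃)(x+v₄)). Then |∫_A^B F(x)^{it} dx| ≤ C(K) · V⁴ / (t · |(v₁−v₄)(v₂−v₄)|). -/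
open Complex intervalIntegral


lemma osc_habs1 (r : ℝ) : ‖(Complex.exp (Complex.I * r))‖ = 1 := by
  simp [Complex.norm_exp]

lemma osc_bound (φ φd φdd : ℝ → ℝ) (A B lam M : ℝ) (hAB : A ≤ B) (hlam : 0 < lam)
    (hM : 0 ≤ M)
    (hd1 : ∀ x ∈ Set.Icc A B, HasDerivAt φ (φd x) x)
    (hd2 : ∀ x ∈ Set.Icc A B, HasDerivAt φd (φdd x) x)
    (hc2 : ContinuousOn φdd (Set.Icc A B))
    (hlow : ∀ x ∈ Set.Icc A B, lam ≤ |φd x|)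
    (hup : ∀ x ∈ Set.Icc A B, |φdd x| ≤ M) :
    ‖(∫ x in A..B, Complex.exp (Complex.I * φ x))‖ ≤
      2/lam + (B-A)*M/lam^2 := by
  have hne : ∀ x ∈ Set.Icc A B, φd x ≠ 0 := by
    intro x hx h0
    have := hlow x hx
    rw [h0, abs_zero] at this
    linarith
  set g : ℝ → ℂ := fun x => Complex.exp (Complex.I * φ x) * (-Complex.I * ((φd x)⁻¹ : ℝ))
    with hg_def
  set h : ℝ → ℂ := fun x =>
    Complex.exp (Complex.I * φ x) * Complex.I * ((φdd x / (φd x)^2 : ℝ) : ℂ) with hh_def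
  set f' : ℝ → ℂ := fun x => Complex.exp (Complex.I * φ x) + h x with hf'_def
  have hg : ∀ x ∈ Set.Icc A B, HasDerivAt g (f' x) x := by
    intro x hx
    have h1 : HasDerivAt (fun y => Complex.I * (φ y : ℂ)) (Complex.I * φd x) x :=
      ((hd1 x hx).ofReal_comp).const_mul Complex.I
    have hexp : HasDerivAt (fun y => Complex.exp (Complex.I * φ y))
        (Complex.exp (Complex.I * φ x) * (Complex.I * φd x)) x := h1.cexp
    have hinv : HasDerivAt (fun y => (-Complex.I) * (((φd y)⁻¹ : ℝ) : ℂ))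
        ((-Complex.I) * ((-(φdd x) / (φd x)^2 : ℝ) : ℂ)) x :=
      (((hd2 x hx).inv (hne x hx)).ofReal_comp).const_mul (-Complex.I)
    have := hexp.mul hinv
    refine HasDerivAt.congr_deriv this ?_
    symm
    have hz : ((φd x : ℂ)) ≠ 0 := Complex.ofReal_ne_zero.2 (hne x hx)
    simp only [hf'_def, hh_def]
    push_cast
    field_simp
    ring_nf
    simp [Complex.I_sq]
  have hcφ : ContinuousOn φ (Set.Icc A B) := fun x hx =>
    ((hd1 x hx).continuousAt).continuousWithinAt
  have hcφd : ContinuousOn φd (Set.Icc A B) := fun x hx =>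
    ((hd2 x hx).continuousAt).continuousWithinAt
  have hcexp : ContinuousOn (fun x => Complex.exp (Complex.I * φ x)) (Set.Icc A B) :=
    Complex.continuous_exp.comp_continuousOn
      (continuousOn_const.mul (Complex.continuous_ofReal.comp_continuousOn hcφ))
  have hch : ContinuousOn h (Set.Icc A B) := by
    apply ContinuousOn.mul (hcexp.mul continuousOn_const)
    apply Complex.continuous_ofReal.comp_continuousOn
    exact hc2.div (hcφd.pow 2) (fun x hx => pow_ne_zero 2 (hne x hx))
  have hIcc : Set.uIcc A B = Set.Icc A B := Set.uIcc_of_le hAB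
  have hInth : IntervalIntegrable h MeasureTheory.volume A B := by
    apply ContinuousOn.intervalIntegrable; rwa [hIcc]
  have hIntexp : IntervalIntegrable (fun x => Complex.exp (Complex.I * φ x))
      MeasureTheory.volume A B := by
    apply ContinuousOn.intervalIntegrable; rwa [hIcc]
  have hIntf' : IntervalIntegrable f' MeasureTheory.volume A B := hIntexp.add hInth
  have key : ∫ x in A..B, f' x = g B - g A :=
    intervalIntegral.integral_eq_sub_of_hasDerivAt (by rw [hIcc]; exact hg) hIntf'
  have split : (∫ x in A..B, Complex.exp (Complex.I * φ x))
      = (g B - g A) - ∫ x in A..B, h x := by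
    rw [← key, ← intervalIntegral.integral_sub hIntf' hInth]
    apply intervalIntegral.integral_congr
    intro x hx
    simp [hf'_def]
  have habsg : ∀ x ∈ Set.Icc A B, ‖(g x)‖ ≤ 1/lam := by
    intro x hx
    have he : ‖(g x)‖ = |φd x|⁻¹ := by
      simp [hg_def, norm_mul, osc_habs1, abs_inv]
    rw [he, inv_eq_one_div]
    exact div_le_div₀ (by norm_num) le_rfl hlam (hlow x hx)
  have habsh : ‖(∫ x in A..B, h x)‖ ≤ (M/lam^2) * |B - A| := by
    apply intervalIntegral.norm_integral_le_of_norm_le_const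
    intro x hx
    have hx' : x ∈ Set.Icc A B := by
      rw [Set.uIoc_of_le hAB] at hx; exact Set.Ioc_subset_Icc_self hx
    have hv : ‖h x‖ = |φdd x| / (φd x)^2 := by
      simp [hh_def, norm_mul, osc_habs1, abs_div, _root_.abs_pow, _root_.sq_abs]
    rw [hv]
    apply div_le_div₀ hM (hup x hx') (by positivity)
    calc lam^2 ≤ |φd x|^2 := pow_le_pow_left₀ hlam.le (hlow x hx') 2
      _ = (φd x)^2 := _root_.sq_abs _
  have hgBA : ‖(g B - g A)‖ ≤ 2/lam := by
    calc ‖(g B - g A)‖ ≤ ‖(g B)‖ + ‖(g A)‖ := by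
          simpa using norm_sub_le (g B) (g A)
      _ ≤ 1/lam + 1/lam :=
          add_le_add (habsg B ⟨hAB, le_rfl⟩) (habsg A ⟨le_rfl, hAB⟩)
      _ = 2/lam := by ring
  have habsh' : ‖(∫ x in A..B, h x)‖ ≤ (B-A)*M/lam^2 := by
    rw [_root_.abs_of_nonneg (by linarith : (0:ℝ) ≤ B - A)] at habsh
    calc ‖(∫ x in A..B, h x)‖ ≤ (M/lam^2) * (B-A) := habsh
      _ = (B-A)*M/lam^2 := by ring
  calc ‖(∫ x in A..B, Complex.exp (Complex.I * φ x))‖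
      ≤ ‖(g B - g A)‖ + ‖(∫ x in A..B, h x)‖ := by
        rw [split]
        simpa using norm_sub_le (g B - g A) (∫ x in A..B, h x)
    _ ≤ 2/lam + (B-A)*M/lam^2 := add_le_add hgBA habsh'

set_option maxHeartbeats 4000000 in
lemma osc_step2 (K A B V t w₁ w₂ w₃ w₄ : ℝ) (hK : 0 < K) (hA : 0 ≤ A) (hAB : A < B)
    (hBK : B ≤ K * V) (hV : 1 ≤ V) (ht : 1 ≤ t)
    (h1l : V / 2 < w₁) (h1u : w₁ ≤ V) (h2l : V / 2 < w₂) (h2u : w₂ ≤ V)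
    (h3l : V / 2 < w₃) (h3u : w₃ ≤ V) (h4l : V / 2 < w₄) (h4u : w₄ ≤ V)
    (h14 : 1 ≤ |w₁ - w₄|) (h24 : 1 ≤ |w₂ - w₄|)
    (hsum : w₁ + w₂ = w₃ + w₄) :
    ‖(∫ x in A..B,
        ((((x + w₁) * (x + w₂)) / ((x + w₃) * (x + w₄)) : ℝ) : ℂ) ^ (Complex.I * t))‖
      ≤ (2*(K+1)^4 + 64*K*(K+1)^9) * V ^ 4 / (t * |(w₁ - w₄) * (w₂ - w₄)|) := by
  have hV0 : (0:ℝ) < V := by linarith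
  have ht0 : (0:ℝ) < t := by linarith
  have hK1 : (0:ℝ) < K + 1 := by linarith
  have hv3 : w₃ = w₁ + w₂ - w₄ := by linarith
  set D : ℝ := (w₁ - w₄) * (w₂ - w₄) with hD_def
  have hD1 : 1 ≤ |D| := by
    have h := mul_le_mul h14 h24 zero_le_one (le_trans zero_le_one h14)
    rw [hD_def, abs_mul]; linarith
  have hD0 : 0 < |D| := by linarith
  have h24le : |w₂ - w₄| ≤ |D| := by
    have h := mul_le_mul_of_nonneg_right h14 (abs_nonneg (w₂ - w₄))
    rw [hD_def, abs_mul]; linarith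
  -- pointwise bounds
  have key : ∀ w : ℝ, V / 2 < w → w ≤ V → ∀ x ∈ Set.Icc A B,
      V / 2 < x + w ∧ x + w ≤ (K+1) * V := by
    intro w hl hu x hx
    constructor
    · have := hx.1; linarith
    · have := hx.2; linarith
  set lam : ℝ := t * V * |D| / ((K+1)*V)^4 with hlam_def
  set M : ℝ := 64*(K+1)*t*|D| / V^3 with hM_def
  have hlam : 0 < lam := by
    apply div_pos (mul_pos (mul_pos ht0 hV0) hD0); positivity
  have hM : 0 ≤ M := by
    apply div_nonneg _ (by positivity)
    exact mul_nonneg (mul_nonneg (mul_nonneg (by norm_num) hK1.le) ht0.le) (abs_nonneg D)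
  set φ : ℝ → ℝ := fun x => t * (Real.log (x + w₁) + Real.log (x + w₂)
      - Real.log (x + w₃) - Real.log (x + w₄)) with hφ_def
  set φd : ℝ → ℝ := fun x => t * ((x + w₁)⁻¹ + (x + w₂)⁻¹ - (x + w₃)⁻¹ - (x + w₄)⁻¹)
    with hφd_def
  set φdd : ℝ → ℝ := fun x => t * (((x + w₃)^2)⁻¹ + ((x + w₄)^2)⁻¹
      - ((x + w₁)^2)⁻¹ - ((x + w₂)^2)⁻¹) with hφdd_def
  have hd1 : ∀ x ∈ Set.Icc A B, HasDerivAt φ (φd x) x := by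
    intro x hx
    have p1 := (key w₁ h1l h1u x hx).1
    have p2 := (key w₂ h2l h2u x hx).1
    have p3 := (key w₃ h3l h3u x hx).1
    have p4 := (key w₄ h4l h4u x hx).1
    have l : ∀ w : ℝ, V/2 < x + w → HasDerivAt (fun y => Real.log (y + w)) ((x + w)⁻¹) x := by
      intro w hw
      have := ((hasDerivAt_id x).add_const w).log (by intro h; rw [h] at hw; linarith : x + w ≠ 0)
      simpa [one_div] using this
    have := ((((l w₁ p1).add (l w₂ p2)).sub (l w₃ p3)).sub (l w₄ p4)).const_mul t
    simpa [hφ_def, hφd_def] using this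
  have hd2 : ∀ x ∈ Set.Icc A B, HasDerivAt φd (φdd x) x := by
    intro x hx
    have p1 := (key w₁ h1l h1u x hx).1
    have p2 := (key w₂ h2l h2u x hx).1
    have p3 := (key w₃ h3l h3u x hx).1
    have p4 := (key w₄ h4l h4u x hx).1
    have n1 : x + w₁ ≠ 0 := by intro h; linarith [h ▸ p1]
    have n2 : x + w₂ ≠ 0 := by intro h; linarith [h ▸ p2]
    have n3 : x + w₃ ≠ 0 := by intro h; linarith [h ▸ p3]
    have n4 : x + w₄ ≠ 0 := by intro h; linarith [h ▸ p4]
    have l : ∀ w : ℝ, x + w ≠ 0 → HasDerivAt (fun y => (y + w)⁻¹) (-1/(x + w)^2) x := by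
      intro w hw
      have := ((hasDerivAt_id x).add_const w).inv hw
      exact this
    have := ((((l w₁ n1).add (l w₂ n2)).sub (l w₃ n3)).sub (l w₄ n4)).const_mul t
    refine HasDerivAt.congr_deriv this ?_
    symm
    simp only [hφdd_def]
    field_simp
    ring
  have hc2 : ContinuousOn φdd (Set.Icc A B) := by
    have csq : ∀ w : ℝ, V/2 < w → w ≤ V →
        ContinuousOn (fun x => ((x + w)^2)⁻¹) (Set.Icc A B) := by
      intro w hl hu
      apply ContinuousOn.inv₀ ((( continuous_id.add continuous_const).pow 2).continuousOn)
      intro x hx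
      have := (key w hl hu x hx).1
      have : 0 < x + w := by nlinarith
      exact pow_ne_zero 2 this.ne'
    exact continuousOn_const.mul
      ((((csq w₃ h3l h3u).add (csq w₄ h4l h4u)).sub (csq w₁ h1l h1u)).sub (csq w₂ h2l h2u))
  have hlow : ∀ x ∈ Set.Icc A B, lam ≤ |φd x| := by
    intro x hx
    obtain ⟨p1, u1⟩ := key w₁ h1l h1u x hx
    obtain ⟨p2, u2⟩ := key w₂ h2l h2u x hx
    obtain ⟨p3, u3⟩ := key w₃ h3l h3u x hx
    obtain ⟨p4, u4⟩ := key w₄ h4l h4u x hx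
    have q1 : 0 < x + w₁ := by linarith
    have q2 : 0 < x + w₂ := by linarith
    have q3 : 0 < x + w₃ := by linarith
    have q4 : 0 < x + w₄ := by linarith
    have hid : φd x = -(t * (2*x + (w₁ + w₂)) * D)
        / ((x + w₁) * (x + w₂) * ((x + w₃) * (x + w₄))) := by
      simp only [hφd_def, hD_def]
      rw [hv3] at q3 ⊢
      field_simp
      ring
    rw [hid, abs_div, abs_neg]
    have hQ : 0 < 2*x + (w₁ + w₂) := by have := hx.1; linarith
    have hP : 0 < (x + w₁) * (x + w₂) * ((x + w₃) * (x + w₄)) := by positivity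
    rw [abs_of_pos hP, abs_mul, abs_mul, abs_of_pos ht0, abs_of_pos hQ]
    rw [hlam_def]
    gcongr
    · have := hx.1; linarith
    · calc (x + w₁) * (x + w₂) * ((x + w₃) * (x + w₄))
          ≤ ((K+1)*V) * ((K+1)*V) * (((K+1)*V) * ((K+1)*V)) := by
            gcongr <;> first | exact u1 | exact u2 | exact u3 | exact u4 | linarith
        _ = ((K+1)*V)^4 := by ring
  have hup : ∀ x ∈ Set.Icc A B, |φdd x| ≤ M := by
    intro x hx
    obtain ⟨p1, u1⟩ := key w₁ h1l h1u x hx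
    obtain ⟨p2, u2⟩ := key w₂ h2l h2u x hx
    obtain ⟨p3, u3⟩ := key w₃ h3l h3u x hx
    obtain ⟨p4, u4⟩ := key w₄ h4l h4u x hx
    have q1 : 0 < x + w₁ := by linarith
    have q2 : 0 < x + w₂ := by linarith
    have q3 : 0 < x + w₃ := by linarith
    have q4 : 0 < x + w₄ := by linarith
    set T₁ : ℝ := ((x + w₂) + (x + w₄)) / ((x + w₂)^2 * (x + w₄)^2) with hT1
    set T₂ : ℝ := ((x + w₁) + (x + w₃)) / ((x + w₁)^2 * (x + w₃)^2) with hT2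
    have hid : φdd x = t * (w₂ - w₄) * (T₁ - T₂) := by
      simp only [hφdd_def, hT1, hT2]
      rw [hv3] at q3 ⊢
      field_simp
      ring
    set R : ℝ := (2*(K+1)*V) / ((V/2)^2 * (V/2)^2) with hR
    have hbT : ∀ a b : ℝ, V/2 < a → a ≤ (K+1)*V → V/2 < b → b ≤ (K+1)*V →
        0 ≤ (a + b) / (a^2 * b^2) ∧ (a + b) / (a^2 * b^2) ≤ R := by
      intro a b hal hau hbl hbu
      have ha0 : 0 < a := by linarith
      have hb0 : 0 < b := by linarith
      constructor
      · positivity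
      · rw [hR]
        gcongr <;>
          first
            | linarith
            | exact pow_le_pow_left₀ (by linarith : (0:ℝ) ≤ V/2) hal.le 2
            | exact pow_le_pow_left₀ (by linarith : (0:ℝ) ≤ V/2) hbl.le 2
    obtain ⟨hT1n, hT1u⟩ := hbT (x + w₂) (x + w₄) p2 u2 p4 u4
    obtain ⟨hT2n, hT2u⟩ := hbT (x + w₁) (x + w₃) p1 u1 p3 u3
    have hTd : |T₁ - T₂| ≤ R := by
      rw [abs_sub_le_iff]; constructor <;> linarith
    have hRval : R = 32*(K+1) / V^3 := by
      rw [hR]; field_simp; ring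
    calc |φdd x| = t * |w₂ - w₄| * |T₁ - T₂| := by
          rw [hid, abs_mul, abs_mul, abs_of_pos ht0]
      _ ≤ t * |w₂ - w₄| * R := by
          apply mul_le_mul_of_nonneg_left hTd (by positivity)
      _ = (32*(K+1)) * (t * |w₂ - w₄|) / V^3 := by rw [hRval]; ring
      _ ≤ (64*(K+1)) * (t * |D|) / V^3 := by
          gcongr ?_ / V^3
          have s1 : t * |w₂ - w₄| ≤ t * |D| := mul_le_mul_of_nonneg_left h24le ht0.le
          have s2 : 0 ≤ t * |D| := mul_nonneg ht0.le (abs_nonneg D)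
          have s3 : (0:ℝ) ≤ 32*(K+1) := by linarith
          linarith [mul_le_mul_of_nonneg_left s1 s3, mul_nonneg s3 s2]
      _ = M := by rw [hM_def]; ring
  -- rewrite integrand
  have hre : (∫ x in A..B,
        ((((x + w₁) * (x + w₂)) / ((x + w₃) * (x + w₄)) : ℝ) : ℂ) ^ (Complex.I * t))
      = ∫ x in A..B, Complex.exp (Complex.I * φ x) := by
    apply intervalIntegral.integral_congr
    intro x hx
    rw [Set.uIcc_of_le hAB.le] at hx
    dsimp only
    have q1 : 0 < x + w₁ := by linarith [(key w₁ h1l h1u x hx).1]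
    have q2 : 0 < x + w₂ := by linarith [(key w₂ h2l h2u x hx).1]
    have q3 : 0 < x + w₃ := by linarith [(key w₃ h3l h3u x hx).1]
    have q4 : 0 < x + w₄ := by linarith [(key w₄ h4l h4u x hx).1]
    have hF : 0 < ((x + w₁) * (x + w₂)) / ((x + w₃) * (x + w₄)) := by positivity
    rw [Complex.cpow_def_of_ne_zero (Complex.ofReal_ne_zero.2 hF.ne')]
    rw [← Complex.ofReal_log hF.le]
    have hlog : Real.log (((x + w₁) * (x + w₂)) / ((x + w₃) * (x + w₄)))
        = Real.log (x + w₁) + Real.log (x + w₂) - Real.log (x + w₃) - Real.log (x + w₄) := by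
      rw [Real.log_div (by positivity) (by positivity),
        Real.log_mul q1.ne' q2.ne', Real.log_mul q3.ne' q4.ne']
      ring
    rw [hlog]
    simp only [hφ_def]
    push_cast
    ring_nf
  rw [hre]
  have hosc := osc_bound φ φd φdd A B lam M hAB.le hlam hM hd1 hd2 hc2 hlow hup
  have e1 : 2/lam ≤ 2*(K+1)^4*V^4/(t*|D|) := by
    have h1 : 2/lam = 2*(K+1)^4*V^3/(t*|D|) := by
      rw [hlam_def]; field_simp
    rw [h1]
    gcongr 2*(K+1)^4*?_/(t*|D|)
    calc V^3 = V^3 * 1 := by ring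
      _ ≤ V^3 * V := mul_le_mul_of_nonneg_left hV (pow_nonneg hV0.le 3)
      _ = V^4 := by ring
  have e2 : (B-A)*M/lam^2 ≤ 64*K*(K+1)^9*V^4/(t*|D|) := by
    have hMl : M/lam^2 = 64*(K+1)^9*V^3/(t*|D|) := by
      rw [hM_def, hlam_def]; field_simp
    have hnn : 0 ≤ 64*(K+1)^9*V^3/(t*|D|) := by positivity
    calc (B-A)*M/lam^2 = (B-A)*(M/lam^2) := by ring
      _ = (B-A)*(64*(K+1)^9*V^3/(t*|D|)) := by rw [hMl]
      _ ≤ (K*V)*(64*(K+1)^9*V^3/(t*|D|)) := by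
          apply mul_le_mul_of_nonneg_right (by linarith) hnn
      _ = 64*K*(K+1)^9*V^4/(t*|D|) := by
          field_simp
  calc ‖(∫ x in A..B, Complex.exp (Complex.I * φ x))‖
      ≤ 2/lam + (B-A)*M/lam^2 := hosc
    _ ≤ 2*(K+1)^4*V^4/(t*|D|) + 64*K*(K+1)^9*V^4/(t*|D|) := add_le_add e1 e2
    _ = (2*(K+1)^4 + 64*K*(K+1)^9) * V^4 / (t*|D|) := by ring

/-- Oscillatory integral bound (case `v₁+v₂ = v₃+v₄`): for
`F(x) = (x+v₁)(x+v₂)/((x+v₃)(x+v₄))`,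
`|∫_A^B F(x)^{it} dx| ≤ C(K) V⁴ / (t |(v₁-v₄)(v₂-v₄)|)`. -/
theorem statement_6 :
    ∀ K : ℝ, 0 < K → ∃ C : ℝ, 0 < C ∧
      ∀ (A B V t : ℝ) (v₁ v₂ v₃ v₄ : ℤ),
        0 ≤ A → A < B → B ≤ K * V → 1 ≤ V → 1 ≤ t →
        V / 2 < (v₁ : ℝ) → (v₁ : ℝ) ≤ V →
        V / 2 < (v₂ : ℝ) → (v₂ : ℝ) ≤ V →
        V / 2 < (v₃ : ℝ) → (v₃ : ℝ) ≤ V →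
        V / 2 < (v₄ : ℝ) → (v₄ : ℝ) ≤ V →
        (v₁ - v₃) * (v₁ - v₄) * (v₂ - v₃) * (v₂ - v₄) ≠ 0 →
        v₁ + v₂ = v₃ + v₄ →
        ‖(∫ x in A..B,
            ((((x + (v₁ : ℝ)) * (x + (v₂ : ℝ))) / ((x + (v₃ : ℝ)) * (x + (v₄ : ℝ))) : ℝ) : ℂ)
              ^ (Complex.I * t))‖
          ≤ C * V ^ 4 / (t * (|((v₁ - v₄) * (v₂ - v₄) : ℤ)| : ℝ)) := by
  intro K hK
  have hK1 : (0:ℝ) < K + 1 := by linarith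
  refine ⟨2*(K+1)^4 + 64*K*(K+1)^9, by
    linarith [pow_pos hK1 4, mul_pos hK (pow_pos hK1 9)], ?_⟩
  intro A B V t v₁ v₂ v₃ v₄ hA hAB hBK hV ht h1l h1u h2l h2u h3l h3u h4l h4u hne hsum
  have h14 : v₁ - v₄ ≠ 0 := by intro h; apply hne; rw [h]; ring
  have h24 : v₂ - v₄ ≠ 0 := by intro h; apply hne; rw [h]; ring
  have h14R : 1 ≤ |(v₁:ℝ) - (v₄:ℝ)| := by exact_mod_cast Int.one_le_abs h14
  have h24R : 1 ≤ |(v₂:ℝ) - (v₄:ℝ)| := by exact_mod_cast Int.one_le_abs h24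
  have hcast : (|((v₁ - v₄) * (v₂ - v₄) : ℤ)| : ℝ)
      = |((v₁:ℝ) - (v₄:ℝ)) * ((v₂:ℝ) - (v₄:ℝ))| := by push_cast; ring_nf
  rw [hcast]
  exact osc_step2 K A B V t (v₁:ℝ) (v₂:ℝ) (v₃:ℝ) (v₄:ℝ) hK hA hAB hBK hV ht
    h1l h1u h2l h2u h3l h3u h4l h4u h14R h24R (by exact_mod_cast hsum)
end

section
/- For every K > 0 there is a constant C(K) > 0 with the following property. Let A, B, V, t be real numbers with 0 ≤ A < B, B ≤ K·V, V ≥ 1, t ≥ 1, and let v₁, v₄ be integers with V/2 < v₁, v₄ ≤ V and v₁ ≠ v₄. Then |∫_A^B ((x+v₁)/(x+v₄))^{it} dx| ≤ C(K) · V² / (t · |v₁ − v₄|). -/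
open Complex

set_option maxHeartbeats 1000000 in
/-- Oscillatory integral bound for a linear fractional phase:
`|∫_A^B ((x+v₁)/(x+v₄))^{it} dx| ≤ C(K) V² / (t |v₁ - v₄|)`. -/
theorem statement_7 :
    ∀ K : ℝ, 0 < K → ∃ C : ℝ, 0 < C ∧
      ∀ (A B V t : ℝ) (v₁ v₄ : ℤ),
        0 ≤ A → A < B → B ≤ K * V → 1 ≤ V → 1 ≤ t →
        V / 2 < (v₁ : ℝ) → (v₁ : ℝ) ≤ V →
        V / 2 < (v₄ : ℝ) → (v₄ : ℝ) ≤ V →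
        v₁ ≠ v₄ →
        ‖∫ x in A..B,
            (((x + (v₁ : ℝ)) / (x + (v₄ : ℝ)) : ℝ) : ℂ) ^ (Complex.I * t)‖
          ≤ C * V ^ 2 / (t * (|(v₁ - v₄ : ℤ)| : ℝ)) := by
  intro K hK
  refine ⟨4 * (K + 1) ^ 2, by positivity, ?_⟩
  intro A B V t v₁ v₄ hA hAB hBK hV ht h1l h1u h4l h4u hne
  set a : ℝ := (v₁ : ℝ) with ha_def
  set b : ℝ := (v₄ : ℝ) with hb_def
  have ht0 : (0:ℝ) < t := lt_of_lt_of_le one_pos ht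
  have hV0 : (0:ℝ) < V := lt_of_lt_of_le one_pos hV
  have ha0 : 0 < a := lt_trans (by linarith) h1l
  have hb0 : 0 < b := lt_trans (by linarith) h4l
  have hab : a ≠ b := by
    simp only [ha_def, hb_def, Ne, Int.cast_inj]
    exact hne
  have hΔ : b - a ≠ 0 := sub_ne_zero.mpr (Ne.symm hab)
  have hδ : 0 < |a - b| := abs_pos.mpr (sub_ne_zero.mpr hab)
  have habs : (|(v₁ - v₄ : ℤ)| : ℝ) = |a - b| := by push_cast; rfl
  have hB0 : 0 < B := lt_of_le_of_lt hA hAB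
  -- positivity on the interval
  have hpos : ∀ x ∈ Set.uIcc A B, 0 < x + a ∧ 0 < x + b := by
    intro x hx
    rw [Set.uIcc_of_le hAB.le] at hx
    constructor <;> nlinarith [hx.1, hx.2]
  set c : ℂ := I * (t : ℂ) * ((b : ℂ) - (a : ℂ)) with hc_def
  have hc : c ≠ 0 := by
    simp only [hc_def]
    apply mul_ne_zero (mul_ne_zero I_ne_zero ?_) ?_
    · exact_mod_cast ht0.ne'
    · rw [show ((b:ℂ) - a) = ((b - a : ℝ) : ℂ) by push_cast; ring]
      exact_mod_cast hΔ
  set L : ℝ → ℝ := fun x => Real.log (x + a) - Real.log (x + b) with hL_def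
  set E : ℝ → ℂ := fun x => Complex.exp (I * (t : ℂ) * ((L x : ℝ) : ℂ)) with hE_def
  set Q : ℝ → ℂ := fun x => (((x + a) * (x + b) : ℝ) : ℂ) / c with hQ_def
  set G : ℝ → ℂ := fun x => E x * Q x with hG_def
  set m : ℝ → ℂ := fun x => E x * (((2 * x + a + b : ℝ) : ℂ) / c) with hm_def
  set g : ℝ → ℂ := fun x => E x + m x with hg_def
  -- the integrand agrees with E on the interval
  have hEq : Set.EqOn (fun x : ℝ => (((x + a) / (x + b) : ℝ) : ℂ) ^ (I * (t:ℂ))) E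
      (Set.uIcc A B) := by
    intro x hx
    obtain ⟨hx1, hx2⟩ := hpos x hx
    have hr : 0 < (x + a) / (x + b) := div_pos hx1 hx2
    have h0 : (((x + a) / (x + b) : ℝ) : ℂ) ≠ 0 := by exact_mod_cast hr.ne'
    simp only [E]
    rw [Complex.cpow_def_of_ne_zero h0, ← Complex.ofReal_log hr.le,
      Real.log_div hx1.ne' hx2.ne']
    ring_nf
    simp only [L]
    ring_nf
  -- derivative of G
  have hderiv : ∀ x ∈ Set.uIcc A B, HasDerivAt G (g x) x := by
    intro x hx
    obtain ⟨hx1, hx2⟩ := hpos x hx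
    have hl1 : HasDerivAt (fun y : ℝ => Real.log (y + a)) (1 / (x + a)) x := by
      have := (((hasDerivAt_id x).add_const a).log hx1.ne')
      simpa using this
    have hl2 : HasDerivAt (fun y : ℝ => Real.log (y + b)) (1 / (x + b)) x := by
      have := (((hasDerivAt_id x).add_const b).log hx2.ne')
      simpa using this
    have hL' : HasDerivAt L (1 / (x + a) - 1 / (x + b)) x := hl1.sub hl2
    have hLC : HasDerivAt (fun y : ℝ => ((L y : ℝ) : ℂ))
        (((1 / (x + a) - 1 / (x + b) : ℝ) : ℂ)) x := hL'.ofReal_comp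
    have hE' : HasDerivAt E
        (E x * (I * (t:ℂ) * ((1 / (x + a) - 1 / (x + b) : ℝ) : ℂ))) x := by
      have := (hLC.const_mul (I * (t:ℂ))).cexp
      simpa [E, mul_comm] using this
    have hP : HasDerivAt (fun y : ℝ => (y + a) * (y + b))
        (1 * (x + b) + (x + a) * 1) x :=
      ((hasDerivAt_id x).add_const a).mul ((hasDerivAt_id x).add_const b)
    have hQ' : HasDerivAt Q (((1 * (x + b) + (x + a) * 1 : ℝ) : ℂ) / c) x :=
      (hP.ofReal_comp).div_const c
    have hG' := hE'.mul hQ'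
    have key : (I * (t:ℂ) * ((1 / (x + a) - 1 / (x + b) : ℝ) : ℂ)) * Q x = 1 := by
      simp only [Q, hc_def]
      have hxa : ((x : ℂ) + a) ≠ 0 := by
        rw [show ((x:ℂ) + a) = ((x + a : ℝ) : ℂ) by push_cast; ring]
        exact_mod_cast hx1.ne'
      have hxb : ((x : ℂ) + b) ≠ 0 := by
        rw [show ((x:ℂ) + b) = ((x + b : ℝ) : ℂ) by push_cast; ring]
        exact_mod_cast hx2.ne'
      have htc : ((t : ℂ)) ≠ 0 := by exact_mod_cast ht0.ne'
      have hbc : ((b : ℂ) - a) ≠ 0 := by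
        rw [show ((b:ℂ) - a) = ((b - a : ℝ) : ℂ) by push_cast; ring]
        exact_mod_cast hΔ
      push_cast
      field_simp
      ring
    have hcast : (1 * (x + b) + (x + a) * 1 : ℝ) = 2 * x + a + b := by ring
    have : E x * (I * (t:ℂ) * ((1 / (x + a) - 1 / (x + b) : ℝ) : ℂ)) * Q x
        + E x * (((1 * (x + b) + (x + a) * 1 : ℝ) : ℂ) / c) = g x := by
      simp only [g, m]
      rw [mul_assoc, key, mul_one, hcast]
    exact this ▸ hG'
  -- continuity
  have hEcont : ContinuousOn E (Set.uIcc A B) := by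
    apply Complex.continuous_exp.comp_continuousOn
    apply ContinuousOn.mul continuousOn_const
    apply Complex.continuous_ofReal.comp_continuousOn
    apply ContinuousOn.sub
    · exact ((continuous_id.add continuous_const).continuousOn).log
        (fun x hx => (hpos x hx).1.ne')
    · exact ((continuous_id.add continuous_const).continuousOn).log
        (fun x hx => (hpos x hx).2.ne')
  have hmcont : ContinuousOn m (Set.uIcc A B) := by
    apply hEcont.mul
    apply ContinuousOn.div_const
    apply Complex.continuous_ofReal.comp_continuousOn
    fun_prop
  have hEint : IntervalIntegrable E MeasureTheory.volume A B :=
    hEcont.intervalIntegrable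
  have hmint : IntervalIntegrable m MeasureTheory.volume A B :=
    hmcont.intervalIntegrable
  have hgint : IntervalIntegrable g MeasureTheory.volume A B := hEint.add hmint
  have hftc := intervalIntegral.integral_eq_sub_of_hasDerivAt hderiv hgint
  have hsplit : (∫ x in A..B, g x) = (∫ x in A..B, E x) + ∫ x in A..B, m x :=
    intervalIntegral.integral_add hEint hmint
  have keyint : (∫ x in A..B, E x) = (G B - G A) - ∫ x in A..B, m x := by
    rw [← hftc, hsplit]; ring
  -- norms
  have habsE : ∀ x : ℝ, ‖E x‖ = 1 := by
    intro x
    simp only [E]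
    rw [show I * (t:ℂ) * ((L x : ℝ) : ℂ) = ((t * L x : ℝ) : ℂ) * I by push_cast; ring]
    exact Complex.norm_exp_ofReal_mul_I _
  have habsc : ‖c‖ = t * |a - b| := by
    simp only [hc_def]
    rw [show ((b:ℂ) - a) = ((b - a : ℝ) : ℂ) by push_cast; ring]
    rw [norm_mul, norm_mul, Complex.norm_I, Complex.norm_real, Complex.norm_real,
      Real.norm_eq_abs, Real.norm_eq_abs, abs_of_pos ht0, abs_sub_comm]
    ring
  have hGbound : ∀ x : ℝ, 0 ≤ x → x ≤ B →
      ‖G x‖ ≤ (K + 1) ^ 2 * V ^ 2 / (t * |a - b|) := by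
    intro x hx0 hxB
    have hxa : 0 < x + a := by linarith
    have hxb : 0 < x + b := by linarith
    simp only [G, Q]
    rw [norm_mul, habsE, one_mul, norm_div, habsc, Complex.norm_real, Real.norm_eq_abs,
      abs_of_pos (mul_pos hxa hxb)]
    apply (div_le_div_iff_of_pos_right (by positivity)).mpr
    have h1 : x + a ≤ (K + 1) * V := by nlinarith
    have h2 : x + b ≤ (K + 1) * V := by nlinarith
    nlinarith
  have hmbound : ‖∫ x in A..B, m x‖
      ≤ 2 * (K + 1) * V / (t * |a - b|) * |B - A| := by
    apply intervalIntegral.norm_integral_le_of_norm_le_const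
    intro x hx
    rw [Set.uIoc_of_le hAB.le] at hx
    have hx0 : 0 ≤ x := le_trans hA hx.1.le
    have hxB : x ≤ B := hx.2
    simp only [m]
    rw [norm_mul, habsE, one_mul, norm_div, habsc, Complex.norm_real, Real.norm_eq_abs]
    rw [abs_of_pos (by nlinarith : (0:ℝ) < 2 * x + a + b)]
    apply (div_le_div_iff_of_pos_right (by positivity)).mpr
    nlinarith
  -- put it together
  rw [intervalIntegral.integral_congr hEq, keyint, habs]
  have h1 := hGbound B hB0.le le_rfl
  have h2 := hGbound A hA (le_of_lt hAB)
  have hBA : |B - A| ≤ K * V := by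
    rw [abs_of_pos (by linarith)]; linarith
  calc ‖(G B - G A) - ∫ x in A..B, m x‖
      ≤ ‖G B - G A‖ + ‖∫ x in A..B, m x‖ := by
        simpa using norm_sub_le (G B - G A) (∫ x in A..B, m x)
    _ ≤ (‖G B‖ + ‖G A‖) + ‖∫ x in A..B, m x‖ := by
        apply add_le_add_left
        simpa using norm_sub_le (G B) (G A)
    _ ≤ ((K + 1) ^ 2 * V ^ 2 / (t * |a - b|) + (K + 1) ^ 2 * V ^ 2 / (t * |a - b|))
        + 2 * (K + 1) * V / (t * |a - b|) * (K * V) := by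
        apply add_le_add (add_le_add h1 h2)
        calc ‖∫ x in A..B, m x‖
            ≤ 2 * (K + 1) * V / (t * |a - b|) * |B - A| := hmbound
          _ ≤ 2 * (K + 1) * V / (t * |a - b|) * (K * V) := by
              apply mul_le_mul_of_nonneg_left hBA (by positivity)
    _ = (2 * (K + 1) ^ 2 * V ^ 2 + 2 * K * (K + 1) * V ^ 2) / (t * |a - b|) := by
        field_simp
        ring
    _ ≤ 4 * (K + 1) ^ 2 * V ^ 2 / (t * |a - b|) := by
        gcongr
        nlinarith [sq_nonneg V, hK.le, hV0.le]
end
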